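/- Let m ≥ 1, let α : ℝ → M_m(ℝ) be a one-parameter family of m×m real matrices, and suppose that at a point t ∈ ℝ the map α has derivative β (i.e. HasDerivAt α β t). Then for every integer r with 1 ≤ r ≤ m, the real-valued function t ↦ ε_r(α(t)) has derivative trace(β · χ_{α(t), r−1}(α(t))) at t. -/

import Mathlib

/-- The `r`-th elementary invariant of an `m × m` real matrix `A`:
`ε_r(A) = (−1)^r · (coefficient of X^(m−r) in det(X·I − A))`. -/
noncomputable def elemInv (m : ℕ) (A : Matrix (Fin m) (Fin m) ℝ) (r : ℕ) : ℝ :=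
  (-1 : ℝ) ^ r * (Matrix.charpoly A).coeff (m - r)

/-- The `r`-th Newton polynomial of `A`, `χ_{A,r}(X) = Σ_{k=0}^{r} (−1)^k ε_{r−k}(A) X^k`,
evaluated at the matrix `B`. -/
noncomputable def newtonEval (m : ℕ) (A B : Matrix (Fin m) (Fin m) ℝ) (r : ℕ) :
    Matrix (Fin m) (Fin m) ℝ :=
  ∑ k ∈ Finset.range (r + 1), ((-1 : ℝ) ^ k * elemInv m A (r - k)) • B ^ k

-- Equip the matrix space with its standard (finite-dimensional) normed structure.
attribute [local instance] Matrix.normedAddCommGroup Matrix.normedSpace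

namespace ElemInvProof
open Matrix Polynomial

section
variable {m : ℕ}


theorem charpoly_natDeg (A : Matrix (Fin m) (Fin m) ℝ) : A.charpoly.natDegree = m := by
  simpa using A.charpoly_natDegree_eq_dim

theorem charpoly_coeff_top (A : Matrix (Fin m) (Fin m) ℝ) : A.charpoly.coeff m = 1 := by
  have h := A.charpoly_monic.coeff_natDegree
  rwa [charpoly_natDeg] at h

theorem newton_rec (A : Matrix (Fin m) (Fin m) ℝ) (k : ℕ) :
    newtonEval m A A (k+1) = elemInv m A (k+1) • 1 - A * newtonEval m A A k := by
  rw [newtonEval, Finset.sum_range_succ']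
  simp only [pow_zero, Nat.sub_zero, one_mul, pow_zero]
  rw [newtonEval, Finset.mul_sum]
  have : ∀ i, ((-1:ℝ)^(i+1) * elemInv m A (k+1-(i+1))) • A^(i+1)
      = -(A * (((-1:ℝ)^i * elemInv m A (k-i)) • A^i)) := by
    intro i
    rw [Matrix.mul_smul, pow_succ, pow_succ']
    have h1 : k + 1 - (i+1) = k - i := by omega
    rw [h1]
    rw [← neg_smul]
    ring_nf
  simp_rw [this]
  rw [Finset.sum_neg_distrib]
  abel

theorem elemInv_zero (A : Matrix (Fin m) (Fin m) ℝ) : elemInv m A 0 = 1 := by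
  rw [elemInv, pow_zero, one_mul, Nat.sub_zero, charpoly_coeff_top]

theorem newton_zero (A : Matrix (Fin m) (Fin m) ℝ) :
    newtonEval m A A 0 = 1 := by
  simp [newtonEval, elemInv_zero]

theorem newton_top (A : Matrix (Fin m) (Fin m) ℝ) :
    newtonEval m A A m = 0 := by
  have hCH := A.aeval_self_charpoly
  have hmono := A.charpoly_monic
  have hdeg := charpoly_natDeg A
  have hsum := hmono.as_sum
  rw [hdeg] at hsum
  have haev : (0 : Matrix (Fin m) (Fin m) ℝ)
      = A ^ m + ∑ i ∈ Finset.range m, A.charpoly.coeff i • A ^ i := by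
    rw [← hCH]
    conv_lhs => rw [hsum]
    rw [map_add, map_sum, aeval_X_pow]
    congr 1
    refine Finset.sum_congr rfl fun i _ => ?_
    rw [_root_.map_mul, aeval_C, aeval_X_pow, Algebra.algebraMap_eq_smul_one, smul_mul_assoc,
      one_mul]
  have hc : ∀ k ≤ m, (-1:ℝ)^k * elemInv m A (m - k) = (-1:ℝ)^m * A.charpoly.coeff k := by
    intro k hk
    rw [elemInv]
    have h1 : m - (m - k) = k := by omega
    rw [h1, ← mul_assoc, ← pow_add]
    have h2 : k + (m - k) = m := by omega
    rw [h2]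
  rw [newtonEval]
  have : ∀ k ∈ Finset.range (m+1), ((-1:ℝ)^k * elemInv m A (m-k)) • A^k
      = ((-1:ℝ)^m) • (A.charpoly.coeff k • A^k) := by
    intro k hk
    rw [hc k (by simpa using Nat.lt_succ_iff.mp (Finset.mem_range.mp hk)),
      mul_smul]
  rw [Finset.sum_congr rfl this, ← Finset.smul_sum, Finset.sum_range_succ,
    charpoly_coeff_top, one_smul, add_comm, ← haev, smul_zero]

theorem charpoly_as_sum (A : Matrix (Fin m) (Fin m) ℝ) :
    A.charpoly = X^m - ∑ k ∈ Finset.range m, C ((-1:ℝ)^k * elemInv m A (k+1)) * X^(m-1-k) := by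
  have hmono := A.charpoly_monic
  have hdeg := charpoly_natDeg A
  have hsum := hmono.as_sum
  rw [hdeg] at hsum
  conv_lhs => rw [hsum]
  rw [sub_eq_add_neg, ← Finset.sum_neg_distrib]
  congr 1
  rw [← Finset.sum_range_reflect]
  refine Finset.sum_congr rfl fun k hk => ?_
  have hk' : k < m := Finset.mem_range.mp hk
  rw [elemInv]
  have h2 : m - (k+1) = m - 1 - k := by omega
  rw [h2, ← neg_mul, ← C_neg]
  have hodd : (-1:ℝ)^k * (-1:ℝ)^(k+1) = -1 := by
    rw [← pow_add]
    exact Odd.neg_one_pow ⟨k, by ring⟩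
  congr 2
  have : -((-1:ℝ)^k * ((-1:ℝ)^(k+1) * A.charpoly.coeff (m-1-k)))
      = -(((-1:ℝ)^k * (-1:ℝ)^(k+1)) * A.charpoly.coeff (m-1-k)) := by ring
  rw [this, hodd]
  ring

end

section
variable {m : ℕ}


noncomputable def detCM (m : ℕ) : ContinuousMultilinearMap ℝ (fun _ : Fin m => (Fin m → ℝ)) ℝ :=
  { toMultilinearMap :=
      (Matrix.detRowAlternating : ((Fin m → ℝ) [⋀^Fin m]→ₗ[ℝ] ℝ)).toMultilinearMap
    cont := by
      have h : Continuous fun A : Matrix (Fin m) (Fin m) ℝ => A.det :=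
        Continuous.matrix_det continuous_id
      exact h }

theorem sum_updateRow_det {m : ℕ} (A B : Matrix (Fin m) (Fin m) ℝ) :
    ∑ i, (A.updateRow i (B i)).det = ((adjugate A) * B).trace := by
  have key : ∀ i, (A.updateRow i (B i)).det = ∑ j, B i j * adjugate A j i := by
    intro i
    have hBi : B i = ∑ j, B i j • (Pi.single j (1:ℝ) : Fin m → ℝ) := by
      ext j; simp [Pi.single_apply]
    calc (A.updateRow i (B i)).det
        = Matrix.detRowAlternating (Function.update A i (∑ j, B i j • (Pi.single j (1:ℝ) : Fin m → ℝ))) := by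
          rw [← hBi]; rfl
      _ = ∑ j, B i j * adjugate A j i := by
          erw [AlternatingMap.map_update_sum]
          refine Finset.sum_congr rfl fun j _ => ?_
          erw [AlternatingMap.map_update_smul]
          rw [adjugate_apply]
          rfl
  simp_rw [key, Matrix.trace, Matrix.diag, Matrix.mul_apply]
  rw [Finset.sum_comm]
  simp [mul_comm]

theorem jacobi {m : ℕ} (α : ℝ → Matrix (Fin m) (Fin m) ℝ) (β : Matrix (Fin m) (Fin m) ℝ)
    (t : ℝ) (hα : HasDerivAt α β t) :
    HasDerivAt (fun s => (α s).det) ((adjugate (α t) * β).trace) t := by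
  have h1 : HasFDerivAt (detCM m) ((detCM m).linearDeriv (α t)) (α t) :=
    (detCM m).hasFDerivAt (α t)
  have h2 := h1.comp_hasDerivAt t hα
  have h3 : (detCM m).linearDeriv (α t) β = ((adjugate (α t) * β)).trace := by
    erw [ContinuousMultilinearMap.linearDeriv_apply, ← sum_updateRow_det]
    rfl
  rw [← h3]
  exact h2

end

section
variable {m : ℕ}

noncomputable def Q (A : Matrix (Fin m) (Fin m) ℝ) : Matrix (Fin m) (Fin m) ℝ[X] :=
  ∑ k ∈ Finset.range m, ((-1:ℝ[X])^k * X^(m-1-k)) • (newtonEval m A A k).map C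

theorem smul_one_map (c : ℝ) :
    ((c • (1 : Matrix (Fin m) (Fin m) ℝ)).map C) = C c • (1 : Matrix (Fin m) (Fin m) ℝ[X]) := by
  ext i j
  simp [Matrix.map_apply, Matrix.one_apply, apply_ite C]

theorem charmatrix_mul_Q (A : Matrix (Fin m) (Fin m) ℝ) :
    charmatrix A * Q A = A.charpoly • (1 : Matrix (Fin m) (Fin m) ℝ[X]) := by
  have hterm : ∀ k ∈ Finset.range m,
      charmatrix A * (((-1:ℝ[X])^k * X^(m-1-k)) • (newtonEval m A A k).map C)
      = (((-1:ℝ[X])^k * X^(m-k)) • (newtonEval m A A k).map C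
          - ((-1:ℝ[X])^(k+1) * X^(m-(k+1))) • (newtonEval m A A (k+1)).map C)
        - (C ((-1:ℝ)^k * elemInv m A (k+1)) * X^(m-1-k)) • (1 : Matrix (Fin m) (Fin m) ℝ[X]) := by
    intro k hk
    have hk' : k < m := Finset.mem_range.mp hk
    have hAN : A * newtonEval m A A k
        = elemInv m A (k+1) • 1 - newtonEval m A A (k+1) := by
      rw [newton_rec]; abel
    have hms : ∀ (M N : Matrix (Fin m) (Fin m) ℝ), (M - N).map (C : ℝ → ℝ[X])
        = M.map C - N.map C := by
      intro M N; ext i j; simp [Matrix.map_apply]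
    rw [Matrix.mul_smul, charmatrix, scalar_apply, ← smul_one_eq_diagonal, sub_mul,
      Matrix.smul_mul, one_mul, RingHom.mapMatrix_apply, ← Matrix.map_mul, hAN,
      hms, smul_one_map]
    rw [smul_sub, smul_sub, smul_smul, smul_smul]
    have he1 : (-1:ℝ[X])^k * X^(m-1-k) * X = (-1:ℝ[X])^k * X^(m-k) := by
      rw [mul_assoc, ← pow_succ]
      congr 2
      omega
    have he2 : (m : ℕ) - (k+1) = m - 1 - k := by omega
    have he3 : (-1:ℝ[X])^(k+1) * X^(m-1-k) = -((-1:ℝ[X])^k * X^(m-1-k)) := by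
      rw [pow_succ]; ring
    have hC : (C ((-1:ℝ)^k) : ℝ[X]) = (-1)^k := by simp
    have he4 : C ((-1:ℝ)^k * elemInv m A (k+1)) * X^(m-1-k)
        = (-1:ℝ[X])^k * X^(m-1-k) * C (elemInv m A (k+1)) := by
      rw [_root_.map_mul, hC]; ring
    rw [he1, he2, he3, he4]
    module
  rw [Q, Finset.mul_sum, Finset.sum_congr rfl hterm, Finset.sum_sub_distrib,
    Finset.sum_range_sub']
  simp only [newton_zero, newton_top, Matrix.map_zero, smul_zero, Matrix.map_one,
    pow_zero, Nat.sub_zero, one_mul, sub_zero]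
  rw [charpoly_as_sum, sub_smul, Finset.sum_smul]
  congr 1
  · ext i j; simp [Matrix.map_apply, Matrix.one_apply, apply_ite C]
end

section
variable {m : ℕ}
theorem adjugate_charmatrix (A : Matrix (Fin m) (Fin m) ℝ) :
    adjugate (charmatrix A) = Q A := by
  have h1 : charmatrix A * adjugate (charmatrix A) = A.charpoly • 1 := by
    rw [Matrix.mul_adjugate]; rfl
  have h2 : charmatrix A * adjugate (charmatrix A) = charmatrix A * Q A := by
    rw [h1, charmatrix_mul_Q]
  have h3 := congrArg (fun M => adjugate (charmatrix A) * M) h2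
  simp only [← Matrix.mul_assoc, Matrix.adjugate_mul] at h3
  have h4 : (charmatrix A).det ≠ 0 := A.charpoly_monic.ne_zero
  refine Matrix.ext fun i j => ?_
  have h5 := congrFun (congrFun h3 i) j
  simp only [Matrix.smul_mul, Matrix.one_mul, Matrix.smul_apply, smul_eq_mul] at h5
  exact mul_left_cancel₀ h4 h5

theorem charmatrix_map_eval (A : Matrix (Fin m) (Fin m) ℝ) (x : ℝ) :
    (charmatrix A).map (eval x) = x • 1 - A := by
  ext i j
  by_cases h : i = j
  · subst h
    simp [charmatrix_apply_eq, Matrix.one_apply]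
  · simp [charmatrix_apply_ne _ _ _ h, Matrix.one_apply, h]

theorem adjugate_real (A : Matrix (Fin m) (Fin m) ℝ) (x : ℝ) :
    adjugate (x • 1 - A)
      = ∑ k ∈ Finset.range m, ((-1:ℝ)^k * x^(m-1-k)) • newtonEval m A A k := by
  have h := congrArg (fun M => M.map (evalRingHom x)) (adjugate_charmatrix A)
  have h' : adjugate ((charmatrix A).map (evalRingHom x)) = (Q A).map (evalRingHom x) := by
    rw [← RingHom.mapMatrix_apply, ← RingHom.map_adjugate, RingHom.mapMatrix_apply]
    exact h
  have hcm : (charmatrix A).map (evalRingHom x) = x • 1 - A := charmatrix_map_eval A x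
  rw [hcm] at h'
  rw [h', Q]
  refine Matrix.ext fun i j => ?_
  simp [Matrix.map_apply, Matrix.sum_apply, Matrix.smul_apply, smul_eq_mul, eval_finset_sum]
  exact Finset.sum_congr rfl fun k _ => by ring
end

section
variable {m : ℕ}

theorem coeff_from_evals (p : ℝ[X]) (hp : p.degree < (m+1 : ℕ)) (c : ℕ) :
    p.coeff c = ∑ i ∈ Finset.range (m+1), p.eval (i:ℝ)
      * (Lagrange.basis (Finset.range (m+1)) (fun j : ℕ => (j:ℝ)) i).coeff c := by
  have hinj : Set.InjOn (fun j : ℕ => (j:ℝ)) (Finset.range (m+1)) :=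
    fun a _ b _ h => Nat.cast_injective h
  have hdeg : p.degree < (Finset.range (m+1)).card := by
    rwa [Finset.card_range]
  conv_lhs => rw [Lagrange.eq_interpolate hinj hdeg]
  rw [Lagrange.interpolate_apply, Polynomial.finset_sum_coeff]
  exact Finset.sum_congr rfl fun i _ => by rw [coeff_C_mul]

theorem eval_charpoly' (A : Matrix (Fin m) (Fin m) ℝ) (x : ℝ) :
    A.charpoly.eval x = (x • 1 - A).det := by
  have : A.charpoly.eval x = evalRingHom x (charmatrix A).det := rfl
  rw [this, RingHom.map_det, RingHom.mapMatrix_apply, Polynomial.coe_evalRingHom,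
    charmatrix_map_eval]

theorem final_sum (A β : Matrix (Fin m) (Fin m) ℝ) (r : ℕ) (hr1 : 1 ≤ r) (hrm : r ≤ m) :
    (-1:ℝ)^r * ∑ i ∈ Finset.range (m+1), (adjugate ((i:ℝ) • 1 - A) * (-β)).trace
      * (Lagrange.basis (Finset.range (m+1)) (fun j : ℕ => (j:ℝ)) i).coeff (m-r)
    = (β * newtonEval m A A (r-1)).trace := by
  set q : ℝ[X] := ∑ k ∈ Finset.range m,
    C (-((-1:ℝ)^k * (newtonEval m A A k * β).trace)) * X^(m-1-k) with hq
  have heval : ∀ x : ℝ, q.eval x = (adjugate (x • 1 - A) * (-β)).trace := by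
    intro x
    rw [adjugate_real, Matrix.sum_mul, Matrix.trace_sum, hq, eval_finset_sum]
    refine Finset.sum_congr rfl fun k _ => ?_
    rw [Matrix.smul_mul, Matrix.trace_smul, Matrix.mul_neg, Matrix.trace_neg]
    simp only [eval_mul, eval_C, eval_pow, eval_X, smul_eq_mul]
    ring
  have hdeg : q.degree < (m+1 : ℕ) := by
    refine lt_of_le_of_lt (Polynomial.degree_sum_le _ _) ?_
    rw [Finset.sup_lt_iff (by exact_mod_cast WithBot.bot_lt_coe (m+1))]
    intro k hk
    refine lt_of_le_of_lt (Polynomial.degree_C_mul_X_pow_le _ _) ?_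
    exact_mod_cast Nat.lt_succ_of_le (by omega)
  have hcoeff : q.coeff (m-r) = (-1:ℝ)^r * (newtonEval m A A (r-1) * β).trace := by
    rw [hq, Polynomial.finset_sum_coeff]
    rw [Finset.sum_eq_single (r-1)]
    · rw [coeff_C_mul, coeff_X_pow, if_pos (by omega)]
      have hp : (-1:ℝ)^r = -(-1:ℝ)^(r-1) := by
        conv_lhs => rw [show r = (r-1)+1 by omega]
        rw [pow_succ]; ring
      rw [hp]; ring
    · intro k hk hne
      rw [coeff_C_mul, coeff_X_pow, if_neg (by
        have := Finset.mem_range.mp hk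
        omega), mul_zero]
    · intro h
      exact absurd (Finset.mem_range.mpr (by omega)) h
  have hsum : ∑ i ∈ Finset.range (m+1), q.eval (i:ℝ)
      * (Lagrange.basis (Finset.range (m+1)) (fun j : ℕ => (j:ℝ)) i).coeff (m-r)
      = q.coeff (m-r) := (coeff_from_evals q hdeg (m-r)).symm
  calc (-1:ℝ)^r * ∑ i ∈ Finset.range (m+1), (adjugate ((i:ℝ) • 1 - A) * (-β)).trace
      * (Lagrange.basis (Finset.range (m+1)) (fun j : ℕ => (j:ℝ)) i).coeff (m-r)
      = (-1:ℝ)^r * q.coeff (m-r) := by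
        rw [← hsum]
        congr 1
        exact Finset.sum_congr rfl fun i _ => by rw [heval]
    _ = (β * newtonEval m A A (r-1)).trace := by
        rw [hcoeff, ← mul_assoc, ← pow_add, Even.neg_one_pow ⟨r, by ring⟩, one_mul,
          Matrix.trace_mul_comm]
end

end ElemInvProof

open ElemInvProof Matrix Polynomial in
/-- If the family `α` of matrices has derivative `β` at `t`, then `t ↦ ε_r(α(t))` has
derivative `trace(β · χ_{α(t),r−1}(α(t)))` at `t`. -/
theorem hasDerivAt_elemInv (m : ℕ) (hm : 1 ≤ m)
    (α : ℝ → Matrix (Fin m) (Fin m) ℝ) (β : Matrix (Fin m) (Fin m) ℝ) (t : ℝ)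
    (hα : HasDerivAt α β t) (r : ℕ) (hr1 : 1 ≤ r) (hrm : r ≤ m) :
    HasDerivAt (fun s => elemInv m (α s) r)
      (Matrix.trace (β * newtonEval m (α t) (α t) (r - 1))) t := by
  have L : ℕ → ℝ := fun i =>
    (Lagrange.basis (Finset.range (m+1)) (fun j : ℕ => (j:ℝ)) i).coeff (m-r)
  have hdegree : ∀ M : Matrix (Fin m) (Fin m) ℝ, M.charpoly.degree < (m+1 : ℕ) := by
    intro M
    rw [Polynomial.degree_eq_natDegree M.charpoly_monic.ne_zero, charpoly_natDeg]
    exact_mod_cast Nat.lt_succ_self m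
  have key : ∀ s : ℝ, elemInv m (α s) r
      = (-1:ℝ)^r * ∑ i ∈ Finset.range (m+1), ((i:ℝ) • 1 - α s).det * ((Lagrange.basis (Finset.range (m+1)) (fun j : ℕ => (j:ℝ)) i).coeff (m-r)) := by
    intro s
    rw [elemInv, coeff_from_evals _ (hdegree (α s))]
    congr 1
    exact Finset.sum_congr rfl fun i _ => by rw [eval_charpoly']
  have hderiv : HasDerivAt
      (fun s => (-1:ℝ)^r * ∑ i ∈ Finset.range (m+1), ((i:ℝ) • 1 - α s).det * ((Lagrange.basis (Finset.range (m+1)) (fun j : ℕ => (j:ℝ)) i).coeff (m-r)))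
      ((-1:ℝ)^r * ∑ i ∈ Finset.range (m+1),
        (adjugate ((i:ℝ) • 1 - α t) * (-β)).trace * ((Lagrange.basis (Finset.range (m+1)) (fun j : ℕ => (j:ℝ)) i).coeff (m-r))) t := by
    refine HasDerivAt.const_mul _ ?_
    refine HasDerivAt.fun_sum fun i _ => ?_
    exact (jacobi (fun s => (i:ℝ) • 1 - α s) (-β) t (hα.const_sub _)).mul_const _
  have hfinal := final_sum (α t) β r hr1 hrm
  have hfun : (fun s => elemInv m (α s) r)
      = fun s => (-1:ℝ)^r * ∑ i ∈ Finset.range (m+1), ((i:ℝ) • 1 - α s).det * ((Lagrange.basis (Finset.range (m+1)) (fun j : ℕ => (j:ℝ)) i).coeff (m-r)) :=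
    funext key
  rw [hfun, show Matrix.trace (β * newtonEval m (α t) (α t) (r - 1))
    = (β * newtonEval m (α t) (α t) (r-1)).trace from rfl, ← hfinal]
  exact hderiv
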